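/- Let H be a hypergraph and G its incidence graph. Then H is eulerian if and only if G has a spanning subgraph G' with at most one non-trivial connected component such that deg_{G'}(e) = 2 for every e-vertex e and deg_{G'}(v) is even for every v-vertex v. -/

import Mathlib

/-- A closed trail in a hypergraph with vertex type `V` and edge index type `E`,
where `F e` is the set of vertices of the edge (with index) `e`.
It is a sequence `v₀ e₁ v₁ e₂ … e_t v_t` with `t ≥ 2`, consecutive anchors
distinct and both incident with the traversed edge, pairwise distinct edges,
and `v₀ = v_t`. -/
structure ClosedTrail (V : Type*) (E : Type*) (F : E → Finset V) where
  len : ℕ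
  two_le_len : 2 ≤ len
  verts : Fin (len + 1) → V
  edges : Fin len → E
  mem_left : ∀ i : Fin len, verts i.castSucc ∈ F (edges i)
  mem_right : ∀ i : Fin len, verts i.succ ∈ F (edges i)
  verts_ne : ∀ i : Fin len, verts i.castSucc ≠ verts i.succ
  edges_injective : Function.Injective edges
  closed : verts 0 = verts (Fin.last len)

/-- An Euler family: a (finite) collection of pairwise anchor-disjoint and
edge-disjoint closed trails jointly traversing every edge exactly once. -/
def HasEulerFamily (V : Type*) (E : Type*) (F : E → Finset V) : Prop :=
  ∃ (n : ℕ) (T : Fin n → ClosedTrail V E F),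
    (∀ i j : Fin n, i ≠ j →
      ∀ (a : Fin ((T i).len + 1)) (b : Fin ((T j).len + 1)),
        (T i).verts a ≠ (T j).verts b) ∧
    (∀ e : E, ∃! p : (i : Fin n) × Fin ((T i).len), (T p.1).edges p.2 = e)

/-- An Euler tour: a closed trail traversing every edge exactly once. -/
def HasEulerTour (V : Type*) (E : Type*) (F : E → Finset V) : Prop :=
  ∃ T : ClosedTrail V E F, Function.Bijective T.edges

/-- An `ℓ`-covering `k`-hypergraph: `k`-uniform, and every `ℓ`-subset of
vertices lies in at least one edge. -/
def IsCoveringHypergraph (V : Type*) (E : Type*) (F : E → Finset V)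
    (ℓ k : ℕ) : Prop :=
  (∀ e : E, (F e).card = k) ∧
  (∀ S : Finset V, S.card = ℓ → ∃ e : E, S ⊆ F e)

/-- Two vertices are related if they lie in a common edge; the reflexive
transitive (symmetric) closure of this relation gives connectivity by walks. -/
def HypAdj (V : Type*) (E : Type*) (F : E → Finset V) (a b : V) : Prop :=
  ∃ e : E, a ∈ F e ∧ b ∈ F e

/-- The number of connected components of a hypergraph (including trivial
components consisting of a single isolated vertex). -/
noncomputable def numComponents (V : Type*) (E : Type*) (F : E → Finset V) : ℕ :=
  Nat.card (Quot (HypAdj V E F))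

/-- `e` is a cut edge of `H` if removing it increases the number of
connected components. -/
def IsCutEdge (V : Type*) (E : Type*) (F : E → Finset V) (e : E) : Prop :=
  numComponents V E F < numComponents V {e' : E // e' ≠ e} (fun e' => F e'.1)

/-- The incidence graph of a hypergraph: a bipartite simple graph on
`V ⊕ E`, where `Sum.inl v` is adjacent to `Sum.inr e` iff `v ∈ F e`. -/
def incidenceGraph (V : Type*) (E : Type*) (F : E → Finset V) :
    SimpleGraph (V ⊕ E) where
  Adj x y :=
    (∃ v e, x = Sum.inl v ∧ y = Sum.inr e ∧ v ∈ F e) ∨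
    (∃ v e, x = Sum.inr e ∧ y = Sum.inl v ∧ v ∈ F e)
  symm := by
    refine ⟨?_⟩
    rintro x y (⟨v, e, hx, hy, h⟩ | ⟨v, e, hx, hy, h⟩)
    · exact Or.inr ⟨v, e, hy, hx, h⟩
    · exact Or.inl ⟨v, e, hy, hx, h⟩
  loopless := by
    refine ⟨?_⟩
    rintro x (⟨v, e, hx, hy, h⟩ | ⟨v, e, hx, hy, h⟩) <;> simp_all

namespace EulerAux

variable {V E : Type*}

/-- A step: (edge, tail vertex, head vertex). -/
abbrev Step (V E : Type*) := E × V × V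

/-- A walk from `u` to `w` as a list of steps. -/
inductive IsWalk : V → V → List (Step V E) → Prop
  | nil (v : V) : IsWalk v v []
  | cons {u w : V} {p : Step V E} {l : List (Step V E)}
      (h : p.2.1 = u) (hw : IsWalk p.2.2 w l) : IsWalk u w (p :: l)

lemma IsWalk.append {u v w : V} {l l' : List (Step V E)}
    (h : IsWalk u v l) (h' : IsWalk v w l') : IsWalk u w (l ++ l') := by
  induction h with
  | nil => simpa using h'
  | cons ht _ ih => exact IsWalk.cons ht (ih h')

lemma IsWalk.split {u w : V} {l l' : List (Step V E)}
    (h : IsWalk u w (l ++ l')) : ∃ v, IsWalk u v l ∧ IsWalk v w l' := by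
  induction l generalizing u with
  | nil => exact ⟨u, IsWalk.nil u, by simpa using h⟩
  | cons p rest ih =>
    cases h with
    | cons ht hw =>
      obtain ⟨v, h1, h2⟩ := ih hw
      exact ⟨v, IsWalk.cons ht h1, h2⟩

lemma IsWalk.nil_eq {u w : V} (h : IsWalk u w ([] : List (Step V E))) : u = w := by
  cases h; rfl

lemma IsWalk.head_tail {u w : V} {p : Step V E} {l : List (Step V E)}
    (h : IsWalk u w (p :: l)) : p.2.1 = u ∧ IsWalk p.2.2 w l := by
  cases h with
  | cons ht hw => exact ⟨ht, hw⟩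

open Classical in
/-- Counting lemma: tails and heads of a walk agree up to the endpoints. -/
lemma IsWalk.count_tails_heads [DecidableEq V] {u w : V} {l : List (Step V E)}
    (h : IsWalk u w l) (x : V) :
    (l.map (·.2.1)).count x + (if w = x then 1 else 0)
      = (l.map (·.2.2)).count x + (if u = x then 1 else 0) := by
  induction h with
  | nil v => rfl
  | cons ht hw ih =>
    rename_i u' w' p l'
    simp only [List.map_cons, List.count_cons, beq_iff_eq]
    subst ht
    split_ifs at ih ⊢ <;> omega

variable [DecidableEq V] [DecidableEq E]

/-- Degree of `x` in the multigraph with edge set `S`, endpoints `a e`, `b e`. -/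
def deg (a b : E → V) (S : Finset E) (x : V) : ℕ :=
  (S.filter (fun e => a e = x)).card + (S.filter (fun e => b e = x)).card

/-- A list of steps compatible with endpoint functions `a`, `b`. -/
def Good (a b : E → V) (l : List (Step V E)) : Prop :=
  ∀ p ∈ l, (p.2.1 = a p.1 ∧ p.2.2 = b p.1) ∨ (p.2.1 = b p.1 ∧ p.2.2 = a p.1)

lemma Good.append {a b : E → V} {l l' : List (Step V E)}
    (h : Good a b l) (h' : Good a b l') : Good a b (l ++ l') := by
  intro p hp; rcases List.mem_append.1 hp with hp | hp
  exacts [h p hp, h' p hp]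

lemma Good.perm {a b : E → V} {l l' : List (Step V E)}
    (h : Good a b l) (hp : l'.Perm l) : Good a b l' :=
  fun p hpp => h p (hp.mem_iff.1 hpp)

lemma deg_used {a b : E → V} {l : List (Step V E)}
    (hg : Good a b l) (hn : (l.map Prod.fst).Nodup) (x : V) :
    deg a b (l.map Prod.fst).toFinset x
      = (l.map (·.2.1)).count x + (l.map (·.2.2)).count x := by
  induction l with
  | nil => simp [deg]
  | cons p l ih =>
    simp only [List.map_cons, List.nodup_cons] at hn
    have hg' : Good a b l := fun q hq => hg q (List.mem_cons_of_mem _ hq)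
    have hpe : p.1 ∉ (l.map Prod.fst).toFinset := by
      simpa using hn.1
    have key := ih hg' hn.2
    simp only [List.map_cons, List.toFinset_cons, List.count_cons, beq_iff_eq]
    unfold deg at key ⊢
    rw [Finset.filter_insert, Finset.filter_insert]
    have hna : p.1 ∉ ((l.map Prod.fst).toFinset.filter (fun e => a e = x)) :=
      fun hh => hpe (Finset.mem_filter.1 hh).1
    have hnb : p.1 ∉ ((l.map Prod.fst).toFinset.filter (fun e => b e = x)) :=
      fun hh => hpe (Finset.mem_filter.1 hh).1
    rcases hg p (List.mem_cons_self) with ⟨h1, h2⟩ | ⟨h1, h2⟩ <;>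
    · rw [h1, h2]
      split_ifs with hax hbx hbx <;>
        first
          | (rw [Finset.card_insert_of_notMem hna, Finset.card_insert_of_notMem hnb]; omega)
          | (rw [Finset.card_insert_of_notMem hna]; omega)
          | (rw [Finset.card_insert_of_notMem hnb]; omega)
          | omega

lemma deg_split {a b : E → V} {C S : Finset E} (hCS : C ⊆ S) (x : V) :
    deg a b S x = deg a b C x + deg a b (S \ C) x := by
  unfold deg
  conv_lhs => rw [← Finset.union_sdiff_of_subset hCS]
  rw [Finset.filter_union, Finset.filter_union,
    Finset.card_union_of_disjoint, Finset.card_union_of_disjoint]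
  · omega
  · exact Finset.disjoint_filter_filter Finset.sdiff_disjoint.symm
  · exact Finset.disjoint_filter_filter Finset.sdiff_disjoint.symm

lemma deg_closed_even {a b : E → V} {l : List (Step V E)} {v : V}
    (hw : IsWalk v v l) (hg : Good a b l) (hn : (l.map Prod.fst).Nodup) (x : V) :
    Even (deg a b (l.map Prod.fst).toFinset x) := by
  have hc := hw.count_tails_heads x
  rw [deg_used hg hn x]
  exact ⟨(l.map (·.2.1)).count x, by omega⟩

lemma deg_open_odd {a b : E → V} {l : List (Step V E)} {v w : V}
    (hw : IsWalk v w l) (hvw : v ≠ w) (hg : Good a b l) (hn : (l.map Prod.fst).Nodup) :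
    Odd (deg a b (l.map Prod.fst).toFinset w) := by
  have hc := hw.count_tails_heads w
  rw [deg_used hg hn w]
  rw [if_pos rfl, if_neg hvw] at hc
  exact ⟨(l.map (·.2.1)).count w, by omega⟩

lemma exists_edge_at {a b : E → V} {S : Finset E} {w : V}
    (hpos : 0 < deg a b S w) : ∃ e ∈ S, a e = w ∨ b e = w := by
  by_contra hno
  push_neg at hno
  have h1 : S.filter (fun e => a e = w) = ∅ :=
    Finset.filter_eq_empty_iff.2 (fun {e} he h => (hno e he).1 h)
  have h2 : S.filter (fun e => b e = w) = ∅ :=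
    Finset.filter_eq_empty_iff.2 (fun {e} he h => (hno e he).2 h)
  unfold deg at hpos
  rw [h1, h2] at hpos
  simp at hpos

lemma exists_closed_from (a b : E → V) :
    ∀ (n : ℕ) (S : Finset E), (∀ x, Even (deg a b S x)) →
    ∀ (v w : V) (l : List (Step V E)), IsWalk v w l → Good a b l →
      (l.map Prod.fst).Nodup → (l.map Prod.fst).toFinset ⊆ S → l ≠ [] →
      (S \ (l.map Prod.fst).toFinset).card ≤ n →
      ∃ l', IsWalk v v l' ∧ Good a b l' ∧ (l'.map Prod.fst).Nodup ∧
        (l'.map Prod.fst).toFinset ⊆ S ∧ l' ≠ [] := by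
  intro n
  induction n with
  | zero =>
    intro S hS v w l hw hg hn hsub hne hcard
    rcases eq_or_ne v w with rfl | hvw
    · exact ⟨l, hw, hg, hn, hsub, hne⟩
    · exfalso
      have hodd := deg_open_odd hw hvw hg hn
      have hsplit := deg_split (a := a) (b := b) hsub w
      have hz : deg a b (S \ (l.map Prod.fst).toFinset) w = 0 := by
        have h0 : S \ (l.map Prod.fst).toFinset = ∅ :=
          Finset.card_eq_zero.1 (Nat.le_zero.1 hcard)
        simp [deg, h0]
      rcases hS w with ⟨k, hk⟩; rcases hodd with ⟨m, hm⟩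
      omega
  | succ n ih =>
    intro S hS v w l hw hg hn hsub hne hcard
    rcases eq_or_ne v w with rfl | hvw
    · exact ⟨l, hw, hg, hn, hsub, hne⟩
    · have hodd := deg_open_odd hw hvw hg hn
      have hsplit := deg_split (a := a) (b := b) hsub w
      have hpos : 0 < deg a b (S \ (l.map Prod.fst).toFinset) w := by
        rcases hS w with ⟨k, hk⟩; rcases hodd with ⟨m, hm⟩; omega
      obtain ⟨e, he, hew⟩ := exists_edge_at hpos
      have heS : e ∈ S := (Finset.mem_sdiff.1 he).1
      have henl : e ∉ (l.map Prod.fst).toFinset := (Finset.mem_sdiff.1 he).2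
      set u' : V := if a e = w then b e else a e with hu'
      set p : Step V E := (e, w, u') with hp
      have hgood : Good a b [p] := by
        intro q hq
        rcases List.mem_singleton.1 hq with rfl
        rcases hew with h | h
        · left; exact ⟨h.symm, by simp [hu', hp, h]⟩
        · right
          constructor
          · exact h.symm
          · by_cases hc : a e = w
            · have hba : b e = a e := h.trans hc.symm
              simp [hp, hu', hc, hba]
            · simp [hp, hu', hc]
      have hwalk1 : IsWalk w u' [p] := IsWalk.cons rfl (IsWalk.nil u')
      have hw' : IsWalk v u' (l ++ [p]) := hw.append hwalk1
      have hg' : Good a b (l ++ [p]) := hg.append hgood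
      have hmap : (l ++ [p]).map Prod.fst = l.map Prod.fst ++ [e] := by simp [hp]
      have hn' : ((l ++ [p]).map Prod.fst).Nodup := by
        rw [hmap]
        refine List.Nodup.append hn (List.nodup_singleton e) ?_
        intro x hx hx'
        rcases List.mem_singleton.1 hx' with rfl
        exact henl (List.mem_toFinset.2 hx)
      have hsub' : ((l ++ [p]).map Prod.fst).toFinset ⊆ S := by
        rw [hmap]
        intro x hx
        rcases List.mem_toFinset.1 hx |> List.mem_append.1 with hx1 | hx1
        · exact hsub (List.mem_toFinset.2 hx1)
        · rcases List.mem_singleton.1 hx1 with rfl; exact heS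
      have hcard' : (S \ ((l ++ [p]).map Prod.fst).toFinset).card ≤ n := by
        rw [hmap]
        have : (l.map Prod.fst ++ [e]).toFinset = insert e (l.map Prod.fst).toFinset := by
          ext x; simp [or_comm]
        rw [this, Finset.sdiff_insert]
        have h1 := Finset.card_erase_of_mem he
        omega
      exact ih S hS v u' (l ++ [p]) hw' hg' hn' hsub' (by simp) hcard'

lemma exists_closed_of_pos (a b : E → V) (S : Finset E)
    (hS : ∀ x, Even (deg a b S x)) (v : V) (hpos : 0 < deg a b S v) :
    ∃ l, IsWalk v v l ∧ Good a b l ∧ (l.map Prod.fst).Nodup ∧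
      (l.map Prod.fst).toFinset ⊆ S ∧ l ≠ [] := by
  obtain ⟨e, heS, hev⟩ := exists_edge_at hpos
  set u' : V := if a e = v then b e else a e with hu'
  set p : Step V E := (e, v, u') with hp
  have hgood : Good a b [p] := by
    intro q hq
    rcases List.mem_singleton.1 hq with rfl
    rcases hev with h | h
    · left; exact ⟨h.symm, by simp [hu', hp, h]⟩
    · right
      refine ⟨h.symm, ?_⟩
      by_cases hc : a e = v
      · have hba : b e = a e := h.trans hc.symm
        simp [hp, hu', hc, hba]
      · simp [hp, hu', hc]
  have hwalk : IsWalk v u' [p] := IsWalk.cons rfl (IsWalk.nil u')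
  refine exists_closed_from a b S.card S hS v u' [p] hwalk hgood (by simp)
    ?_ (by simp) (Finset.card_le_card (Finset.sdiff_subset))
  intro x hx
  simp only [List.map_cons, List.map_nil, List.toFinset_cons, List.toFinset_nil,
    Finset.mem_insert] at hx
  rcases hx with rfl | hx
  · exact heS
  · simp at hx

/-- The adjacency relation of the multigraph given by `a`, `b`. -/
def MAdj (a b : E → V) (s t : V) : Prop :=
  ∃ e : E, (a e = s ∧ b e = t) ∨ (a e = t ∧ b e = s)

lemma euler_full (a b : E → V) [Fintype E]
    (hS : ∀ x, Even (deg a b Finset.univ x))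
    (hconn : ∀ x y : V, (∃ e, a e = x ∨ b e = x) → (∃ e, a e = y ∨ b e = y) →
      Relation.ReflTransGen (MAdj a b) x y) :
    ∀ (n : ℕ) (v : V) (l : List (Step V E)), IsWalk v v l → Good a b l →
      (l.map Prod.fst).Nodup → l ≠ [] →
      (Finset.univ \ (l.map Prod.fst).toFinset).card ≤ n →
      ∃ (w : V) (l' : List (Step V E)), IsWalk w w l' ∧ Good a b l' ∧
        (l'.map Prod.fst).Nodup ∧ (l'.map Prod.fst).toFinset = Finset.univ ∧ l' ≠ [] := by
  intro n
  induction n with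
  | zero =>
    intro v l hw hg hn hne hcard
    refine ⟨v, l, hw, hg, hn, ?_, hne⟩
    have h0 : Finset.univ \ (l.map Prod.fst).toFinset = ∅ :=
      Finset.card_eq_zero.1 (Nat.le_zero.1 hcard)
    have := Finset.sdiff_eq_empty_iff_subset.1 h0
    exact Finset.Subset.antisymm (Finset.subset_univ _) this
  | succ n ih =>
    intro v l hw hg hn hne hcard
    set C := (l.map Prod.fst).toFinset with hC
    by_cases hCu : C = Finset.univ
    · exact ⟨v, l, hw, hg, hn, hCu, hne⟩
    · -- there is an unused edge
      have hUne : (Finset.univ \ C).Nonempty := by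
        rw [Finset.sdiff_nonempty]
        intro hsub
        exact hCu (Finset.Subset.antisymm (Finset.subset_univ _) hsub)
      obtain ⟨e₀, he₀⟩ := hUne
      -- the support of the closed trail
      set T : Finset V := insert v ((l.map (·.2.1)).toFinset) with hT
      have hvT : v ∈ T := Finset.mem_insert_self _ _
      have hheads : ∀ x : V, x ∈ l.map (·.2.2) → x ∈ l.map (·.2.1) := by
        intro x hx
        have hc := hw.count_tails_heads x
        have : 0 < (l.map (·.2.2)).count x := List.count_pos_iff.2 hx
        have : 0 < (l.map (·.2.1)).count x := by omega
        exact List.count_pos_iff.1 this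
      have hends : ∀ e ∈ C, a e ∈ T ∧ b e ∈ T := by
        intro e he
        obtain ⟨q, hq, hqe⟩ : ∃ q ∈ l, q.1 = e := by
          rcases List.mem_map.1 (List.mem_toFinset.1 he) with ⟨q, hq, hqe⟩
          exact ⟨q, hq, hqe⟩
        have htl : q.2.1 ∈ T := by
          refine Finset.mem_insert_of_mem (List.mem_toFinset.2 ?_)
          exact List.mem_map.2 ⟨q, hq, rfl⟩
        have hhd : q.2.2 ∈ T := by
          refine Finset.mem_insert_of_mem (List.mem_toFinset.2 ?_)
          exact hheads _ (List.mem_map.2 ⟨q, hq, rfl⟩)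
        rcases hg q hq with ⟨h1, h2⟩ | ⟨h1, h2⟩ <;>
          [skip; skip] <;> subst hqe <;>
          constructor <;> first
            | (rw [← h1]; assumption)
            | (rw [← h2]; assumption)
      -- some unused edge touches the support
      have hkey : ∃ e', e' ∈ Finset.univ \ C ∧ (a e' ∈ T ∨ b e' ∈ T) := by
        by_contra hno
        push_neg at hno
        have hclosed : ∀ x ∈ T, ∀ y, MAdj a b x y → y ∈ T := by
          intro x hx y ⟨e, hcase⟩
          by_cases heC : e ∈ C
          · rcases hends e heC with ⟨ha, hb⟩
            rcases hcase with ⟨h1, h2⟩ | ⟨h1, h2⟩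
            · exact h2 ▸ hb
            · exact h1 ▸ ha
          · exfalso
            have he' : e ∈ Finset.univ \ C := Finset.mem_sdiff.2 ⟨Finset.mem_univ _, heC⟩
            rcases hcase with ⟨h1, h2⟩ | ⟨h1, h2⟩
            · exact (hno e he').1 (by rwa [h1])
            · exact (hno e he').2 (by rwa [h2])
        -- v is incident to an edge
        have hvinc : ∃ e, a e = v ∨ b e = v := by
          rcases l with _ | ⟨p, rest⟩
          · exact absurd rfl hne
          · obtain ⟨htl, -⟩ := hw.head_tail
            rcases hg p (List.mem_cons_self) with ⟨h1, -⟩ | ⟨h1, -⟩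
            · exact ⟨p.1, Or.inl (h1 ▸ htl)⟩
            · exact ⟨p.1, Or.inr (h1 ▸ htl)⟩
        have hreach := hconn v (a e₀) hvinc ⟨e₀, Or.inl rfl⟩
        have hmemT : ∀ y, Relation.ReflTransGen (MAdj a b) v y → y ∈ T := by
          intro y hy
          induction hy with
          | refl => exact hvT
          | tail hstep hlast ih2 => exact hclosed _ ih2 _ hlast
        exact (hno e₀ he₀).1 (hmemT _ hreach)
      obtain ⟨e', he'U, he'T⟩ := hkey
      -- the touched support vertex
      obtain ⟨w', hw'T, hw'end⟩ : ∃ w', w' ∈ T ∧ (a e' = w' ∨ b e' = w') := by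
        rcases he'T with h | h
        · exact ⟨a e', h, Or.inl rfl⟩
        · exact ⟨b e', h, Or.inr rfl⟩
      -- rotate l to start at w'
      obtain ⟨l₀, hwalk₀, hperm₀⟩ :
          ∃ l₀, IsWalk w' w' l₀ ∧ l₀.Perm l := by
        rcases Finset.mem_insert.1 hw'T with rfl | hmem
        · exact ⟨l, hw, List.Perm.refl l⟩
        · obtain ⟨q, hq, hqtl⟩ : ∃ q ∈ l, q.2.1 = w' := by
            rcases List.mem_map.1 (List.mem_toFinset.1 hmem) with ⟨q, hq, hqe⟩
            exact ⟨q, hq, hqe⟩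
          obtain ⟨l1, l2, rfl⟩ := List.append_of_mem hq
          obtain ⟨m, hm1, hm2⟩ := hw.split
          obtain ⟨hm3, -⟩ := hm2.head_tail
          have hmw : m = w' := hqtl ▸ hm3.symm
          subst hmw
          exact ⟨(q :: l2) ++ l1, hm2.append hm1, List.perm_append_comm⟩
      have hg₀ : Good a b l₀ := hg.perm hperm₀
      have hperm₀f : (l₀.map Prod.fst).Perm (l.map Prod.fst) := hperm₀.map _
      have hn₀ : (l₀.map Prod.fst).Nodup := hperm₀f.nodup_iff.2 hn
      have hC₀ : (l₀.map Prod.fst).toFinset = C := by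
        rw [hC]; ext x; simp only [List.mem_toFinset]; exact ⟨fun h => hperm₀f.mem_iff.1 h, fun h => hperm₀f.mem_iff.2 h⟩
      have hne₀ : l₀ ≠ [] := by
        intro h
        rw [h] at hperm₀
        have := hperm₀.symm.eq_nil
        exact hne this
      -- even degrees outside C
      have hCsub : C ⊆ Finset.univ := Finset.subset_univ _
      have hevenout : ∀ x, Even (deg a b (Finset.univ \ C) x) := by
        intro x
        have h1 := deg_split (a := a) (b := b) hCsub x
        have h2 : Even (deg a b C x) := by
          rw [← hC₀]; exact deg_closed_even hwalk₀ hg₀ hn₀ x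
        rcases hS x with ⟨k, hk⟩; rcases h2 with ⟨m, hm⟩
        exact ⟨k - m, by omega⟩
      have hposw' : 0 < deg a b (Finset.univ \ C) w' := by
        unfold deg
        rcases hw'end with h | h
        · have : e' ∈ (Finset.univ \ C).filter (fun e => a e = w') :=
            Finset.mem_filter.2 ⟨he'U, h⟩
          have := Finset.card_pos.2 ⟨e', this⟩
          omega
        · have : e' ∈ (Finset.univ \ C).filter (fun e => b e = w') :=
            Finset.mem_filter.2 ⟨he'U, h⟩
          have := Finset.card_pos.2 ⟨e', this⟩
          omega
      obtain ⟨l₁, hwalk₁, hg₁, hn₁, hsub₁, hne₁⟩ :=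
        exists_closed_of_pos a b (Finset.univ \ C) hevenout w' hposw'
      -- combine
      set l₂ := l₀ ++ l₁ with hl₂
      have hwalk₂ : IsWalk w' w' l₂ := hwalk₀.append hwalk₁
      have hg₂ : Good a b l₂ := hg₀.append hg₁
      have hdisj : ∀ x ∈ l₀.map Prod.fst, x ∉ l₁.map Prod.fst := by
        intro x hx hx'
        have h1 : x ∈ C := hC₀ ▸ List.mem_toFinset.2 hx
        have h2 : x ∈ Finset.univ \ C := hsub₁ (List.mem_toFinset.2 hx')
        exact (Finset.mem_sdiff.1 h2).2 h1
      have hn₂ : (l₂.map Prod.fst).Nodup := by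
        rw [hl₂, List.map_append]
        exact List.Nodup.append hn₀ hn₁ hdisj
      have hne₂ : l₂ ≠ [] := by simp [hl₂, hne₀]
      -- card decreases
      obtain ⟨e₁, he₁⟩ : ∃ e₁, e₁ ∈ l₁.map Prod.fst := by
        rcases l₁ with _ | ⟨q, rest⟩
        · exact absurd rfl hne₁
        · exact ⟨q.1, List.mem_cons_self⟩
      have he₁U : e₁ ∈ Finset.univ \ C := hsub₁ (List.mem_toFinset.2 he₁)
      have hC₂ : (l₂.map Prod.fst).toFinset = C ∪ (l₁.map Prod.fst).toFinset := by
        rw [hl₂, List.map_append, List.toFinset_append, hC₀]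
      have hcard₂ : (Finset.univ \ (l₂.map Prod.fst).toFinset).card ≤ n := by
        have hsub' : Finset.univ \ (l₂.map Prod.fst).toFinset ⊆
            (Finset.univ \ C).erase e₁ := by
          intro x hx
          rcases Finset.mem_sdiff.1 hx with ⟨hx1, hx2⟩
          refine Finset.mem_erase.2 ⟨?_, Finset.mem_sdiff.2 ⟨hx1, ?_⟩⟩
          · rintro rfl
            exact hx2 (hC₂ ▸ Finset.mem_union_right _ (List.mem_toFinset.2 he₁))
          · intro hxC
            exact hx2 (hC₂ ▸ Finset.mem_union_left _ hxC)
        have h1 := Finset.card_le_card hsub'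
        have h2 := Finset.card_erase_of_mem he₁U
        omega
      exact ih w' l₂ hwalk₂ hg₂ hn₂ hne₂ hcard₂

lemma IsWalk.get_tail_zero {u w : V} {l : List (Step V E)} (h : IsWalk u w l)
    (hl : 0 < l.length) : (l.get ⟨0, hl⟩).2.1 = u := by
  cases h with
  | nil => simp at hl
  | cons ht hw => exact ht

lemma IsWalk.get_head {u w : V} {l : List (Step V E)} (h : IsWalk u w l) :
    ∀ (i : ℕ) (hi : i < l.length),
      (l.get ⟨i, hi⟩).2.2
        = if h' : i + 1 < l.length then (l.get ⟨i + 1, h'⟩).2.1 else w := by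
  induction h with
  | nil => intro i hi; simp at hi
  | cons ht hwlk ih =>
    rename_i u' w' p l'
    intro i hi
    match i with
    | 0 =>
      by_cases h' : 0 + 1 < (p :: l').length
      · rw [dif_pos h']
        have hl' : 0 < l'.length := by simpa using h'
        have := hwlk.get_tail_zero hl'
        simpa using this.symm
      · rw [dif_neg h']
        have hl0 : l' = [] := by
          rcases l' with _ | ⟨q, r⟩
          · rfl
          · exfalso; apply h'; simp
        subst hl0
        exact hwlk.nil_eq
    | Nat.succ j =>
      have hj : j < l'.length := by simpa using hi
      have := ih j hj
      simp only [List.get_cons_succ]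
      by_cases h' : j + 1 < l'.length
      · rw [dif_pos h'] at this
        have h'' : j + 1 + 1 < (p :: l').length := by simpa using h'
        rw [dif_pos h'']
        simpa using this
      · rw [dif_neg h'] at this
        have h'' : ¬ (j + 1 + 1 < (p :: l').length) := by simpa using h'
        rw [dif_neg h'']
        exact this

lemma exists_tour {F : E → Finset V} {a b : E → V} (ha : ∀ e, a e ∈ F e)
    (hb : ∀ e, b e ∈ F e) (hab : ∀ e, a e ≠ b e) {w : V} {l : List (Step V E)}
    (hw : IsWalk w w l) (hg : Good a b l) (hn : (l.map Prod.fst).Nodup)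
    (hne : l ≠ []) (hall : ∀ e : E, e ∈ l.map Prod.fst) :
    ∃ T : ClosedTrail V E F, Function.Bijective T.edges := by
  have hn0 : 0 < l.length := List.length_pos_iff.2 hne
  have hn2 : 2 ≤ l.length := by
    by_contra hcon
    push_neg at hcon
    rcases l with _ | ⟨p, rest⟩
    · exact hne rfl
    · rcases rest with _ | ⟨q, r⟩
      · obtain ⟨htl, hw2⟩ := hw.head_tail
        have hhd : p.2.2 = w := hw2.nil_eq
        rcases hg p (List.mem_cons_self) with ⟨h1, h2⟩ | ⟨h1, h2⟩
        · exact hab p.1 (by rw [← h1, ← h2, htl, hhd])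
        · exact hab p.1 (by rw [← h1, ← h2, htl, hhd])
      · simp only [List.length_cons] at hcon; omega
  have hgood : ∀ (i : Fin l.length),
      ((l.get i).2.1 = a (l.get i).1 ∧ (l.get i).2.2 = b (l.get i).1)
      ∨ ((l.get i).2.1 = b (l.get i).1 ∧ (l.get i).2.2 = a (l.get i).1) :=
    fun i => hg _ (List.get_mem l i)
  have hinj : ∀ i j : Fin l.length, (l.get i).1 = (l.get j).1 → i = j := by
    intro i j hij
    have hinj' := List.nodup_iff_injective_get.1 hn
    have hlm : (l.map Prod.fst).length = l.length := by simp
    have h2 : (l.map Prod.fst).get (Fin.cast hlm.symm i)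
        = (l.map Prod.fst).get (Fin.cast hlm.symm j) := by
      simpa using hij
    have h3 := hinj' h2
    exact Fin.ext (by simpa using congrArg Fin.val h3)
  refine ⟨⟨l.length, hn2,
    (fun i => if h : (i : ℕ) < l.length then (l.get ⟨i, h⟩).2.1 else w),
    (fun i => (l.get i).1), ?_, ?_, ?_, ?_, ?_⟩, ?_, ?_⟩
  · -- mem_left
    intro i
    simp only [Fin.coe_castSucc, i.isLt, dif_pos]
    rcases hgood i with ⟨h1, -⟩ | ⟨h1, -⟩
    · rw [show l.get ⟨(i : ℕ), i.isLt⟩ = l.get i by rfl, h1]; exact ha _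
    · rw [show l.get ⟨(i : ℕ), i.isLt⟩ = l.get i by rfl, h1]; exact hb _
  · -- mem_right
    intro i
    have hchain := hw.get_head i i.isLt
    simp only [Fin.val_succ]
    have hmem : (l.get i).2.2 ∈ F (l.get i).1 := by
      rcases hgood i with ⟨-, h2⟩ | ⟨-, h2⟩
      · rw [h2]; exact hb _
      · rw [h2]; exact ha _
    by_cases h' : (i : ℕ) + 1 < l.length
    · rw [dif_pos h']
      rw [dif_pos h'] at hchain
      rw [← hchain]
      exact hmem
    · rw [dif_neg h']
      rw [dif_neg h'] at hchain
      rw [← hchain]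
      exact hmem
  · -- verts_ne
    intro i
    have hchain := hw.get_head i i.isLt
    simp only [Fin.coe_castSucc, i.isLt, dif_pos, Fin.val_succ]
    have hne' : (l.get i).2.1 ≠ (l.get i).2.2 := by
      rcases hgood i with ⟨h1, h2⟩ | ⟨h1, h2⟩
      · rw [h1, h2]; exact hab _
      · rw [h1, h2]; exact fun h => hab _ h.symm
    by_cases h' : (i : ℕ) + 1 < l.length
    · rw [dif_pos h']
      rw [dif_pos h'] at hchain
      rw [← hchain]; exact hne'
    · rw [dif_neg h']
      rw [dif_neg h'] at hchain
      rw [← hchain]; exact hne'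
  · -- edges_injective
    intro i j hij
    exact hinj i j hij
  · -- closed
    simp only [Fin.val_zero, Fin.val_last]
    simp only [hn0, lt_irrefl, ↓reduceDIte]
    exact hw.get_tail_zero hn0
  · -- injective
    intro i j hij
    exact hinj i j hij
  · -- surjective
    intro e
    obtain ⟨k, hk⟩ := List.mem_iff_get.1 (hall e)
    refine ⟨⟨(k : ℕ), by simpa using k.isLt⟩, ?_⟩
    simpa using hk

section Forward
variable {F : E → Finset V}

/-- The spanning subgraph induced by a closed trail. -/
def trailGraph (T : ClosedTrail V E F) : SimpleGraph (V ⊕ E) where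
  Adj x y := ∃ i : Fin T.len,
    (x = Sum.inl (T.verts i.castSucc) ∧ y = Sum.inr (T.edges i)) ∨
    (y = Sum.inl (T.verts i.castSucc) ∧ x = Sum.inr (T.edges i)) ∨
    (x = Sum.inl (T.verts i.succ) ∧ y = Sum.inr (T.edges i)) ∨
    (y = Sum.inl (T.verts i.succ) ∧ x = Sum.inr (T.edges i))
  symm := by
    refine ⟨?_⟩
    rintro x y ⟨i, h⟩
    exact ⟨i, by tauto⟩
  loopless := by
    refine ⟨?_⟩
    rintro x ⟨i, h⟩
    rcases h with ⟨h1, h2⟩ | ⟨h1, h2⟩ | ⟨h1, h2⟩ | ⟨h1, h2⟩ <;> simp_all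

lemma trailGraph_le (T : ClosedTrail V E F) : trailGraph T ≤ incidenceGraph V E F := by
  rintro x y ⟨i, h⟩
  rcases h with ⟨h1, h2⟩ | ⟨h1, h2⟩ | ⟨h1, h2⟩ | ⟨h1, h2⟩
  · exact Or.inl ⟨_, _, h1, h2, T.mem_left i⟩
  · exact Or.inr ⟨_, _, h2, h1, T.mem_left i⟩
  · exact Or.inl ⟨_, _, h1, h2, T.mem_right i⟩
  · exact Or.inr ⟨_, _, h2, h1, T.mem_right i⟩

lemma verts_rot (T : ClosedTrail V E F) (i : Fin T.len) :
    haveI : NeZero T.len := ⟨by have := T.two_le_len; omega⟩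
    T.verts ((i + 1).castSucc) = T.verts i.succ := by
  haveI : NeZero T.len := ⟨by have := T.two_le_len; omega⟩
  by_cases h : (i : ℕ) + 1 < T.len
  · congr 1
    apply Fin.ext
    simp only [Fin.coe_castSucc, Fin.val_add, Fin.val_one', Fin.val_succ]
    have h2 : 1 % T.len = 1 := Nat.mod_eq_of_lt (by have := T.two_le_len; omega)
    rw [h2, Nat.mod_eq_of_lt h]
  · have hi : (i : ℕ) + 1 = T.len := by have := i.isLt; omega
    have h1 : (i + 1 : Fin T.len) = 0 := by
      apply Fin.ext
      simp [Fin.add_def, hi]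
    have h2 : i.succ = Fin.last T.len := by
      apply Fin.ext
      simp [hi]
    rw [h1, h2, ← T.closed]
    rfl
end Forward

section Forward2
variable {F : E → Finset V}

lemma trailGraph_nbr_inr (T : ClosedTrail V E F) (hbij : Function.Bijective T.edges)
    (e : E) : ((trailGraph T).neighborSet (Sum.inr e)).ncard = 2 := by
  obtain ⟨i, rfl⟩ := hbij.2 e
  have hset : (trailGraph T).neighborSet (Sum.inr (T.edges i))
      = {Sum.inl (T.verts i.castSucc), Sum.inl (T.verts i.succ)} := by
    ext z
    simp only [SimpleGraph.mem_neighborSet, Set.mem_insert_iff, Set.mem_singleton_iff]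
    constructor
    · rintro ⟨j, ⟨h1, h2⟩ | ⟨h1, h2⟩ | ⟨h1, h2⟩ | ⟨h1, h2⟩⟩
      · exact absurd h1 (by simp)
      · have hji : i = j := hbij.1 (Sum.inr.inj h2)
        subst hji; exact Or.inl h1
      · exact absurd h1 (by simp)
      · have hji : i = j := hbij.1 (Sum.inr.inj h2)
        subst hji; exact Or.inr h1
    · rintro (rfl | rfl)
      · exact ⟨i, Or.inr (Or.inl ⟨rfl, rfl⟩)⟩
      · exact ⟨i, Or.inr (Or.inr (Or.inr ⟨rfl, rfl⟩))⟩
  rw [hset, Set.ncard_pair]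
  intro h
  exact T.verts_ne i (Sum.inl.inj h)

lemma trailGraph_nbr_inl (T : ClosedTrail V E F) [Fintype E]
    (hbij : Function.Bijective T.edges) (v : V) :
    Even (((trailGraph T).neighborSet (Sum.inl v)).ncard) := by
  classical
  haveI : NeZero T.len := ⟨by have := T.two_le_len; omega⟩
  set I : Finset (Fin T.len) :=
    Finset.univ.filter (fun i => T.verts i.castSucc = v ∨ T.verts i.succ = v) with hI
  have hset : (trailGraph T).neighborSet (Sum.inl v)
      = (fun i => (Sum.inr (T.edges i) : V ⊕ E)) '' (I : Set (Fin T.len)) := by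
    ext z
    simp only [SimpleGraph.mem_neighborSet, Set.mem_image, Finset.mem_coe, hI,
      Finset.mem_filter, Finset.mem_univ, true_and]
    constructor
    · rintro ⟨j, ⟨h1, h2⟩ | ⟨h1, h2⟩ | ⟨h1, h2⟩ | ⟨h1, h2⟩⟩
      · exact ⟨j, Or.inl (Sum.inl.inj h1).symm, h2.symm⟩
      · exact absurd h2 (by simp)
      · exact ⟨j, Or.inr (Sum.inl.inj h1).symm, h2.symm⟩
      · exact absurd h2 (by simp)
    · rintro ⟨j, hj, rfl⟩
      rcases hj with h | h
      · exact ⟨j, Or.inl ⟨by rw [h], rfl⟩⟩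
      · exact ⟨j, Or.inr (Or.inr (Or.inl ⟨by rw [h], rfl⟩))⟩
  have hinj : Function.Injective (fun i : Fin T.len => (Sum.inr (T.edges i) : V ⊕ E)) :=
    fun i j h => hbij.1 (Sum.inr.inj h)
  rw [hset, Set.ncard_image_of_injective _ hinj, Set.ncard_coe_finset]
  have hIsplit : I.card
      = (Finset.univ.filter (fun i : Fin T.len => T.verts i.castSucc = v)).card
        + (Finset.univ.filter (fun i : Fin T.len => T.verts i.succ = v)).card := by
    rw [hI, Finset.filter_or, Finset.card_union_of_disjoint]
    rw [Finset.disjoint_filter]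
    intro i _ h1 h2
    exact T.verts_ne i (h1.trans h2.symm)
  have hbijcard : (Finset.univ.filter (fun i : Fin T.len => T.verts i.succ = v)).card
      = (Finset.univ.filter (fun i : Fin T.len => T.verts i.castSucc = v)).card := by
    refine Finset.card_bij' (fun i _ => i + 1) (fun j _ => j - 1) ?hi ?hj ?li ?ri
    case hi =>
      intro i hi
      simp only [Finset.mem_filter, Finset.mem_univ, true_and] at hi ⊢
      rw [verts_rot T i]
      exact hi
    case hj =>
      intro j hj
      simp only [Finset.mem_filter, Finset.mem_univ, true_and] at hj ⊢
      have hjj : (j - 1) + 1 = j := sub_add_cancel j 1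
      rw [← verts_rot T (j - 1), hjj]
      exact hj
    case li => intro i _; exact add_sub_cancel_right i 1
    case ri => intro j _; exact sub_add_cancel j 1
  rw [hIsplit, hbijcard]
  exact ⟨_, rfl⟩

end Forward2

section Forward3
variable {F : E → Finset V}

lemma trailGraph_aux (T : ClosedTrail V E F) :
    ∀ (k : ℕ) (hk : k ≤ T.len),
      (trailGraph T).Reachable (Sum.inl (T.verts 0))
        (Sum.inl (T.verts ⟨k, Nat.lt_succ_of_le hk⟩)) := by
  intro k
  induction k with
  | zero =>
    intro hk
    have h0 : (⟨0, Nat.lt_succ_of_le hk⟩ : Fin (T.len + 1)) = 0 := Fin.ext rfl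
    rw [h0]
  | succ k ih =>
    intro hk
    have hk' : k ≤ T.len := Nat.le_of_succ_le hk
    have hkl : k < T.len := hk
    set i : Fin T.len := ⟨k, hkl⟩ with hi
    have adj1 : (trailGraph T).Adj (Sum.inl (T.verts i.castSucc)) (Sum.inr (T.edges i)) :=
      ⟨i, Or.inl ⟨rfl, rfl⟩⟩
    have adj2 : (trailGraph T).Adj (Sum.inr (T.edges i)) (Sum.inl (T.verts i.succ)) :=
      ⟨i, Or.inr (Or.inr (Or.inr ⟨rfl, rfl⟩))⟩
    have e1 : i.castSucc = (⟨k, Nat.lt_succ_of_le hk'⟩ : Fin (T.len + 1)) := Fin.ext rfl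
    have e2 : i.succ = (⟨k + 1, Nat.lt_succ_of_le hk⟩ : Fin (T.len + 1)) := Fin.ext rfl
    rw [e1] at adj1
    rw [e2] at adj2
    exact ((ih hk').trans adj1.reachable).trans adj2.reachable

lemma trailGraph_reach0 (T : ClosedTrail V E F) (z : V ⊕ E)
    (hz : ∃ z', (trailGraph T).Adj z z') :
    (trailGraph T).Reachable (Sum.inl (T.verts 0)) z := by
  obtain ⟨z', j, hcase⟩ := hz
  have hcs : ∀ j : Fin T.len,
      (trailGraph T).Reachable (Sum.inl (T.verts 0)) (Sum.inl (T.verts j.castSucc)) := by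
    intro j
    have := trailGraph_aux T j.val (Nat.le_of_lt j.isLt)
    have he : (⟨j.val, Nat.lt_succ_of_le (Nat.le_of_lt j.isLt)⟩ : Fin (T.len + 1))
        = j.castSucc := Fin.ext rfl
    rwa [he] at this
  have hsc : ∀ j : Fin T.len,
      (trailGraph T).Reachable (Sum.inl (T.verts 0)) (Sum.inl (T.verts j.succ)) := by
    intro j
    have := trailGraph_aux T (j.val + 1) j.isLt
    have he : (⟨j.val + 1, Nat.lt_succ_of_le j.isLt⟩ : Fin (T.len + 1))
        = j.succ := Fin.ext rfl
    rwa [he] at this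
  have hedge : ∀ j : Fin T.len,
      (trailGraph T).Reachable (Sum.inl (T.verts 0)) (Sum.inr (T.edges j)) := by
    intro j
    have adj1 : (trailGraph T).Adj (Sum.inl (T.verts j.castSucc)) (Sum.inr (T.edges j)) :=
      ⟨j, Or.inl ⟨rfl, rfl⟩⟩
    exact (hcs j).trans adj1.reachable
  rcases hcase with ⟨h1, h2⟩ | ⟨h1, h2⟩ | ⟨h1, h2⟩ | ⟨h1, h2⟩
  · rw [h1]; exact hcs j
  · rw [h2]; exact hedge j
  · rw [h1]; exact hsc j
  · rw [h2]; exact hedge j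

lemma trailGraph_conn (T : ClosedTrail V E F) (x y : V ⊕ E)
    (hx : ∃ x', (trailGraph T).Adj x x') (hy : ∃ y', (trailGraph T).Adj y y') :
    (trailGraph T).Reachable x y :=
  (trailGraph_reach0 T x hx).symm.trans (trailGraph_reach0 T y hy)

end Forward3

end EulerAux


/-- A hypergraph `H` is eulerian (empty or admits an Euler tour)
iff its incidence graph has a spanning subgraph `G'` with at most one
non-trivial connected component in which every e-vertex has degree 2 and
every v-vertex has even degree. -/
theorem eulerian_iff_incidence {V E : Type*} [Fintype V] [Nonempty V] [Fintype E]
    (F : E → Finset V) :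
    (IsEmpty E ∨ HasEulerTour V E F) ↔
      ∃ G' : SimpleGraph (V ⊕ E), G' ≤ incidenceGraph V E F ∧
        (∀ x y : V ⊕ E, (∃ x', G'.Adj x x') → (∃ y', G'.Adj y y') →
          G'.Reachable x y) ∧
        (∀ e : E, (G'.neighborSet (Sum.inr e)).ncard = 2) ∧
        (∀ v : V, Even ((G'.neighborSet (Sum.inl v)).ncard)) := by
  classical
  constructor
  · rintro (hE | ⟨T, hbij⟩)
    · refine ⟨⊥, bot_le, ?_, ?_, ?_⟩
      · rintro x y ⟨x', hx⟩ hy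
        exact absurd hx (by simp)
      · intro e; exact isEmptyElim e
      · intro v
        have h0 : (⊥ : SimpleGraph (V ⊕ E)).neighborSet (Sum.inl v) = ∅ := by
          ext z; simp
        rw [h0]; simp
    · exact ⟨EulerAux.trailGraph T, EulerAux.trailGraph_le T, EulerAux.trailGraph_conn T,
        EulerAux.trailGraph_nbr_inr T hbij, EulerAux.trailGraph_nbr_inl T hbij⟩
  · rintro ⟨G', hle, hconnG, hdeg2, hdegeven⟩
    by_cases hE : IsEmpty E
    · exact Or.inl hE
    right
    haveI : Nonempty E := not_isEmpty_iff.1 hE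
    -- neighbors of an e-vertex are v-vertices
    have inr_adj_form : ∀ (e : E) (x : V ⊕ E), G'.Adj (Sum.inr e) x →
        ∃ v, x = Sum.inl v ∧ v ∈ F e := by
      intro e x h
      rcases hle h with ⟨v, e', h1, h2, hm⟩ | ⟨v, e', h1, h2, hm⟩
      · exact absurd h1 (by simp)
      · obtain rfl : e' = e := (Sum.inr.inj h1).symm
        exact ⟨v, h2, hm⟩
    -- extract the two endpoints of each edge
    have hex : ∀ e : E, ∃ a' b' : V, a' ≠ b' ∧ a' ∈ F e ∧ b' ∈ F e ∧
        G'.neighborSet (Sum.inr e) = {Sum.inl a', Sum.inl b'} := by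
      intro e
      obtain ⟨x, y, hxy, hset⟩ := Set.ncard_eq_two.1 (hdeg2 e)
      have hx : G'.Adj (Sum.inr e) x := by
        rw [← SimpleGraph.mem_neighborSet, hset]; left; rfl
      have hy : G'.Adj (Sum.inr e) y := by
        rw [← SimpleGraph.mem_neighborSet, hset]; right; rfl
      obtain ⟨vx, rfl, hvx⟩ := inr_adj_form e x hx
      obtain ⟨vy, rfl, hvy⟩ := inr_adj_form e y hy
      exact ⟨vx, vy, fun h => hxy (by rw [h]), hvx, hvy, hset⟩
    choose a b hab hFa hFb hnbr using hex
    -- adjacency characterization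
    have hadj_iff : ∀ (v : V) (e : E),
        G'.Adj (Sum.inl v) (Sum.inr e) ↔ (v = a e ∨ v = b e) := by
      intro v e
      constructor
      · intro h
        have hmem : (Sum.inl v : V ⊕ E) ∈ G'.neighborSet (Sum.inr e) := h.symm
        rw [hnbr e] at hmem
        rcases hmem with h' | h'
        · exact Or.inl (Sum.inl.inj h')
        · exact Or.inr (Sum.inl.inj h')
      · rintro (rfl | rfl)
        · have hmem : (Sum.inl (a e) : V ⊕ E) ∈ G'.neighborSet (Sum.inr e) := by
            rw [hnbr e]; left; rfl
          exact hmem.symm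
        · have hmem : (Sum.inl (b e) : V ⊕ E) ∈ G'.neighborSet (Sum.inr e) := by
            rw [hnbr e]; right; rfl
          exact hmem.symm
    have adj_form : ∀ x y : V ⊕ E, G'.Adj x y →
        (∃ v e, x = Sum.inl v ∧ y = Sum.inr e ∧ (v = a e ∨ v = b e)) ∨
        (∃ v e, x = Sum.inr e ∧ y = Sum.inl v ∧ (v = a e ∨ v = b e)) := by
      intro x y h
      rcases hle h with ⟨v, e, h1, h2, hm⟩ | ⟨v, e, h1, h2, hm⟩
      · subst h1; subst h2
        exact Or.inl ⟨v, e, rfl, rfl, (hadj_iff v e).1 h⟩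
      · subst h1; subst h2
        exact Or.inr ⟨v, e, rfl, rfl, (hadj_iff v e).1 h.symm⟩
    -- even degrees in the multigraph
    have hdeg : ∀ x : V, EulerAux.deg a b Finset.univ x
        = (G'.neighborSet (Sum.inl x)).ncard := by
      intro x
      have hset : G'.neighborSet (Sum.inl x)
          = (fun e => (Sum.inr e : V ⊕ E)) ''
            ((Finset.univ.filter (fun e => a e = x ∨ b e = x) : Finset E) : Set E) := by
        ext z
        simp only [SimpleGraph.mem_neighborSet, Set.mem_image, Finset.coe_filter,
          Set.mem_setOf_eq, Finset.mem_univ, true_and]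
        constructor
        · intro h
          rcases adj_form _ _ h with ⟨v, e, h1, h2, h3⟩ | ⟨v, e, h1, h2, h3⟩
          · obtain rfl : v = x := (Sum.inl.inj h1).symm
            subst h2
            refine ⟨e, ?_, rfl⟩
            rcases h3 with h3 | h3
            · exact Or.inl h3.symm
            · exact Or.inr h3.symm
          · exact absurd h1 (by simp)
        · rintro ⟨e, he, rfl⟩
          refine (hadj_iff x e).2 ?_
          rcases he with h | h
          · exact Or.inl h.symm
          · exact Or.inr h.symm
      rw [hset, Set.ncard_image_of_injective _ (fun p q h => Sum.inr.inj h),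
        Set.ncard_coe_finset]
      unfold EulerAux.deg
      rw [Finset.filter_or, Finset.card_union_of_disjoint]
      rw [Finset.disjoint_filter]
      intro e _ h1 h2
      exact hab e (h1.trans h2.symm)
    have hEv : ∀ x, Even (EulerAux.deg a b Finset.univ x) := by
      intro x; rw [hdeg x]; exact hdegeven x
    -- connectivity translation
    have hconn : ∀ x y : V, (∃ e, a e = x ∨ b e = x) → (∃ e, a e = y ∨ b e = y) →
        Relation.ReflTransGen (EulerAux.MAdj a b) x y := by
      have key : ∀ (n : ℕ) (s t : V ⊕ E) (w : G'.Walk s t), w.length ≤ n →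
          ∀ x y : V, s = Sum.inl x → t = Sum.inl y →
            Relation.ReflTransGen (EulerAux.MAdj a b) x y := by
        intro n
        induction n with
        | zero =>
          intro s t w hw x y hs ht
          cases w with
          | nil =>
            obtain rfl : x = y := Sum.inl.inj (hs.symm.trans ht)
            exact Relation.ReflTransGen.refl
          | cons h p => simp at hw
        | succ n ih =>
          intro s t w hw x y hs ht
          cases w with
          | nil =>
            obtain rfl : x = y := Sum.inl.inj (hs.symm.trans ht)
            exact Relation.ReflTransGen.refl
          | cons hadj p =>
            subst hs
            rcases adj_form _ _ hadj with ⟨v, e, h1, h2, h3⟩ | ⟨v, e, h1, h2, h3⟩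
            · have hxv : x = v := Sum.inl.inj h1
              subst h2
              cases p with
              | nil => exact absurd ht (by simp)
              | cons hadj2 p2 =>
                rcases adj_form _ _ hadj2 with ⟨v2, e2, g1, g2, g3⟩ | ⟨v2, e2, g1, g2, g3⟩
                · exact absurd g1 (by simp)
                · have hee : e = e2 := Sum.inr.inj g1
                  rw [← hee] at g3
                  have hx3 : x = a e ∨ x = b e := by rw [hxv]; exact h3
                  have hstep : Relation.ReflTransGen (EulerAux.MAdj a b) x v2 := by
                    rcases hx3 with h3' | h3' <;> rcases g3 with g3' | g3'
                    · rw [h3', g3']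
                    · exact Relation.ReflTransGen.single ⟨e, Or.inl ⟨h3'.symm, g3'.symm⟩⟩
                    · exact Relation.ReflTransGen.single ⟨e, Or.inr ⟨g3'.symm, h3'.symm⟩⟩
                    · rw [h3', g3']
                  have hlen2 : p2.length ≤ n := by
                    simp only [SimpleGraph.Walk.length_cons] at hw
                    omega
                  exact hstep.trans (ih _ _ p2 hlen2 v2 y g2 ht)
            · exact absurd h1 (by simp)
      intro x y hx hy
      obtain ⟨ex, hex⟩ := hx
      obtain ⟨ey, hey⟩ := hy
      have hadjx : G'.Adj (Sum.inl x) (Sum.inr ex) := by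
        refine (hadj_iff x ex).2 ?_
        rcases hex with h | h
        · exact Or.inl h.symm
        · exact Or.inr h.symm
      have hadjy : G'.Adj (Sum.inl y) (Sum.inr ey) := by
        refine (hadj_iff y ey).2 ?_
        rcases hey with h | h
        · exact Or.inl h.symm
        · exact Or.inr h.symm
      obtain ⟨p⟩ := hconnG _ _ ⟨_, hadjx⟩ ⟨_, hadjy⟩
      exact key p.length _ _ p le_rfl x y rfl rfl
    -- run Hierholzer
    obtain ⟨e₀⟩ := (inferInstance : Nonempty E)
    have hpos : 0 < EulerAux.deg a b Finset.univ (a e₀) := by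
      unfold EulerAux.deg
      have : e₀ ∈ Finset.univ.filter (fun e => a e = a e₀) :=
        Finset.mem_filter.2 ⟨Finset.mem_univ _, rfl⟩
      have := Finset.card_pos.2 ⟨e₀, this⟩
      omega
    obtain ⟨l, hwl, hgl, hnl, hsubl, hnel⟩ :=
      EulerAux.exists_closed_of_pos a b Finset.univ hEv (a e₀) hpos
    obtain ⟨w, l', hw', hg', hn', huniv, hne'⟩ :=
      EulerAux.euler_full a b hEv hconn
        (Finset.univ \ (l.map Prod.fst).toFinset).card (a e₀) l hwl hgl hnl hnel le_rfl
    have hall : ∀ e : E, e ∈ l'.map Prod.fst := by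
      intro e
      have : e ∈ (l'.map Prod.fst).toFinset := huniv ▸ Finset.mem_univ e
      exact List.mem_toFinset.1 this
    exact EulerAux.exists_tour hFa hFb hab hw' hg' hn' hne' hall
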